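/- arXiv:2407.05613 — 2 statements merged into one kernel-verified Lean document; each statement's English description precedes it below -/
import Mathlib

section
/- For 1 ≤ p₁ < p₂ ≤ q < ∞, the inclusion M^{p₂}_q(ℝ) ⊊ M^{p₁}_q(ℝ) is proper: there exists a step function f taking only values 0 and 1 on unit intervals [j, j+1), j ∈ ℤ, with f ∈ M^{p₁}_q(ℝ) and f ∉ M^{p₂}_q(ℝ). -/
open scoped ENNReal BigOperators

/-- Discrete Morrey norm over symmetric index sets `S_{m,N} = {m-N, …, m+N}`. -/
noncomputable def dnorm (p q : ℝ) (x : ℤ → ℝ) : ℝ≥0∞ :=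
  ⨆ (m : ℤ) (N : ℕ), ((2 * N + 1 : ℝ≥0∞) ^ (1 / q - 1 / p)) *
    ENNReal.ofReal ((∑ j ∈ Finset.Icc (m - N) (m + N), |x j| ^ p) ^ (1 / p))

/-- Discrete Morrey norm over arbitrary index intervals `S*_{k,n} = {k, …, k+n}`. -/
noncomputable def dnormStar (p q : ℝ) (x : ℤ → ℝ) : ℝ≥0∞ :=
  ⨆ (k : ℤ) (n : ℕ), ((n + 1 : ℝ≥0∞) ^ (1 / q - 1 / p)) *
    ENNReal.ofReal ((∑ j ∈ Finset.Icc k (k + n), |x j| ^ p) ^ (1 / p))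

/-- Morrey norm on the real line. -/
noncomputable def mnormR (p q : ℝ) (f : ℝ → ℝ) : ℝ≥0∞ :=
  ⨆ (a : ℝ) (r : Set.Ioi (0 : ℝ)),
    ENNReal.ofReal ((2 * r.1) ^ (1 / q - 1 / p) *
      (∫ t in (a - r.1)..(a + r.1), |f t| ^ p) ^ (1 / p))

/-- The step function `x̃(t) = ∑_j x_j χ_{[j,j+1)}(t)`, i.e. `x̃(t) = x ⌊t⌋`. -/
noncomputable def step (x : ℤ → ℝ) : ℝ → ℝ := fun t => x ⌊t⌋

/-- The set `S_n = {1 + 2^v + ⋯ + 2^{(n-1)v} + j·2^{nw} : j = 1, …, 2^{n(v-w)}}`. -/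
def Sn (v w n : ℕ) : Set ℤ :=
  {m | ∃ j : ℕ, 1 ≤ j ∧ j ≤ 2 ^ (n * (v - w)) ∧
    m = ((∑ i ∈ Finset.range n, 2 ^ (i * v) : ℕ) : ℤ) + (j : ℤ) * 2 ^ (n * w)}

/-- The sequence with `x_j = 1` iff `j ∈ {0,1} ∪ ⋃_{n≥1} S_n`, `x_j = 0` otherwise. -/
noncomputable def xseq (v w : ℕ) : ℤ → ℝ :=
  Set.indicator (({0, 1} : Set ℤ) ∪ ⋃ n ∈ Set.Ici 1, Sn v w n) 1

/-- `β_n = 1 + 2^v + ⋯ + 2^{nv}`. -/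
def beta (v n : ℕ) : ℕ := ∑ i ∈ Finset.range (n + 1), 2 ^ (i * v)

section MorreyAux
open MeasureTheory
open scoped Classical ENNReal

/-- all base-`b` digits of `n` are `< d` -/
def goodN (b d n : ℕ) : Prop := ∀ i, n / b ^ i % b < d

/-- spreading map: base-`d` digits of `m` reinterpreted in base `b` -/
def gfun (b d m : ℕ) : ℕ := Nat.ofDigits b (Nat.digits d m)

lemma gfun_zero (b d : ℕ) : gfun b d 0 = 0 := by simp [gfun]

lemma gfun_rec (b : ℕ) {d m : ℕ} (h2d : 2 ≤ d) (hm : m ≠ 0) :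
    gfun b d m = m % d + b * gfun b d (m / d) := by
  unfold gfun
  rw [Nat.digits_def' (by omega : 1 < d) (Nat.pos_of_ne_zero hm), Nat.ofDigits_cons]

lemma gfun_lt {b d : ℕ} (h2d : 2 ≤ d) (hdb : d ≤ b) :
    ∀ k m, m < d ^ k → gfun b d m < b ^ k := by
  intro k
  induction k with
  | zero =>
    intro m hm
    simp only [pow_zero] at hm ⊢
    have : m = 0 := by omega
    subst this; simp [gfun_zero]
  | succ k ih =>
    intro m hm
    rcases Nat.eq_zero_or_pos m with h0 | h0
    · subst h0; rw [gfun_zero]; exact Nat.pow_pos (by omega)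
    · rw [gfun_rec b h2d h0.ne']
      have hdiv : m / d < d ^ k := by
        rw [Nat.div_lt_iff_lt_mul (by omega)]
        calc m < d ^ (k+1) := hm
        _ = d ^ k * d := by ring
      have h1 : gfun b d (m / d) < b ^ k := ih _ hdiv
      have h2 : m % d < d := Nat.mod_lt _ (by omega)
      have h3 : b * gfun b d (m / d) + b ≤ b ^ (k+1) := by
        calc b * gfun b d (m / d) + b = b * (gfun b d (m / d) + 1) := by ring
        _ ≤ b * b ^ k := Nat.mul_le_mul_left _ h1
        _ = b ^ (k+1) := by ring
      omega

lemma gfun_pos {b d : ℕ} (h2d : 2 ≤ d) (hdb : d ≤ b) :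
    ∀ m, 1 ≤ m → 1 ≤ gfun b d m := by
  intro m
  induction m using Nat.strong_induction_on with
  | _ m ih =>
    intro hm
    rw [gfun_rec b h2d (by omega)]
    rcases Nat.eq_zero_or_pos (m % d) with h | h
    · have hd : d ≤ m := by
        by_contra hc
        push_neg at hc
        rw [Nat.mod_eq_of_lt hc] at h; omega
      have h1 : 1 ≤ m / d := (Nat.one_le_div_iff (by omega)).2 hd
      have h2 : m / d < m := Nat.div_lt_self (by omega) (by omega)
      have h3 := ih _ h2 h1
      have h4 : b * 1 ≤ b * gfun b d (m / d) := Nat.mul_le_mul_left _ h3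
      omega
    · omega

lemma gfun_strictMono {b d : ℕ} (h2d : 2 ≤ d) (hdb : d ≤ b) :
    StrictMono (gfun b d) := by
  intro m m' hlt
  induction m' using Nat.strong_induction_on generalizing m with
  | _ m' ih =>
    rcases Nat.eq_zero_or_pos m with rfl | hm
    · rw [gfun_zero]; exact gfun_pos h2d hdb m' (by omega)
    · rw [gfun_rec b h2d (by omega), gfun_rec b h2d (by omega : m' ≠ 0)]
      have hqle : m / d ≤ m' / d := Nat.div_le_div_right hlt.le
      rcases lt_or_eq_of_le hqle with hq | hq
      · have h1 : gfun b d (m / d) < gfun b d (m' / d) :=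
          ih _ (Nat.div_lt_self (by omega) (by omega)) hq
        have h2 : m % d < d := Nat.mod_lt _ (by omega)
        have h3 : b * gfun b d (m / d) + b ≤ b * gfun b d (m' / d) := by
          calc b * gfun b d (m / d) + b = b * (gfun b d (m / d) + 1) := by ring
          _ ≤ b * gfun b d (m' / d) := Nat.mul_le_mul_left _ h1
        omega
      · have e1 := Nat.div_add_mod m d
        have e2 := Nat.div_add_mod m' d
        rw [hq] at e1 ⊢
        omega

lemma gfun_good {b d : ℕ} (h2d : 2 ≤ d) (hdb : d ≤ b) :
    ∀ m, goodN b d (gfun b d m) := by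
  intro m
  induction m using Nat.strong_induction_on with
  | _ m ih =>
    rcases Nat.eq_zero_or_pos m with rfl | hm
    · intro i; rw [gfun_zero]; simpa using by omega
    · intro i
      rw [gfun_rec b h2d (by omega)]
      have hb2 : 2 ≤ b := le_trans h2d hdb
      have hmod : m % d < d := Nat.mod_lt _ (by omega)
      cases i with
      | zero =>
        simp only [pow_zero, Nat.div_one]
        rw [Nat.add_mul_mod_self_left, Nat.mod_eq_of_lt (by omega : m % d < b)]
        exact hmod
      | succ i =>
        have hdivb : (m % d + b * gfun b d (m / d)) / b = gfun b d (m / d) := by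
          rw [Nat.add_mul_div_left _ _ (by omega : 0 < b), Nat.div_eq_of_lt (by omega)]
          omega
        have key : (m % d + b * gfun b d (m / d)) / b ^ (i+1) = gfun b d (m / d) / b ^ i := by
          rw [pow_succ', ← Nat.div_div_eq_div_mul, hdivb]
        rw [key]
        exact ih _ (Nat.div_lt_self (by omega) (by omega)) i

section
variable {b d : ℕ}

lemma Tk_card (h2d : 2 ≤ d) (hdb : d ≤ b) :
    ∀ k, ((Finset.range (b ^ k)).filter (fun s => ∀ i < k, s / b ^ i % b < d)).card ≤ d ^ k := by
  have hb0 : 0 < b := by omega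
  intro k
  induction k with
  | zero => simpa using le_trans (Finset.card_filter_le _ _) (by simp)
  | succ k ih =>
    have step : ((Finset.range (b ^ (k+1))).filter (fun s => ∀ i < k+1, s / b ^ i % b < d)).card
        ≤ (((Finset.range (b ^ k)).filter (fun s => ∀ i < k, s / b ^ i % b < d)) ×ˢ
            Finset.range d).card := by
      apply Finset.card_le_card_of_injOn (fun s => (s / b, s % b))
      · intro s hs
        simp only [Finset.mem_coe, Finset.mem_filter, Finset.mem_range] at hs
        obtain ⟨hlt, hdig⟩ := hs
        simp only [Finset.mem_coe, Finset.mem_product, Finset.mem_filter, Finset.mem_range]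
        refine ⟨⟨?_, ?_⟩, ?_⟩
        · rw [Nat.div_lt_iff_lt_mul hb0]
          calc s < b ^ (k+1) := hlt
          _ = b ^ k * b := by ring
        · intro i hi
          rw [Nat.div_div_eq_div_mul, ← pow_succ']
          exact hdig (i+1) (by omega)
        · have := hdig 0 (by omega)
          simpa using this
      · intro s _ t _ h
        simp only [Prod.mk.injEq] at h
        have e1 := Nat.div_add_mod s b
        have e2 := Nat.div_add_mod t b
        rw [h.1, h.2] at e1
        omega
    calc _ ≤ _ := step
    _ = _ * d := by rw [Finset.card_product, Finset.card_range]
    _ ≤ d ^ k * d := Nat.mul_le_mul_right _ ih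
    _ = d ^ (k+1) := by ring

lemma count_aligned (h2d : 2 ≤ d) (hdb : d ≤ b) (k M : ℕ) :
    ((Finset.Ico (M * b ^ k) (M * b ^ k + b ^ k)).filter (goodN b d)).card ≤ d ^ k := by
  have hb0 : 0 < b := by omega
  refine le_trans (Finset.card_le_card_of_injOn (fun n => n - M * b ^ k)
    ?_ ?_) (Tk_card h2d hdb k)
  · intro n hn
    simp only [Finset.mem_coe, Finset.mem_filter, Finset.mem_Ico] at hn
    obtain ⟨⟨h1, h2⟩, hg⟩ := hn
    simp only [Finset.mem_coe, Finset.mem_filter, Finset.mem_range]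
    set s := n - M * b ^ k with hs
    have hslt : s < b ^ k := by omega
    refine ⟨hslt, ?_⟩
    intro i hi
    have hsplit : n = s + (M * b ^ (k - i - 1)) * b ^ (i + 1) := by
      rw [hs]
      have hpp : b ^ (k - i - 1) * b ^ (i + 1) = b ^ k := by
        rw [← pow_add]; congr 1; omega
      have h' : M * b ^ (k - i - 1) * b ^ (i+1) = M * b ^ k := by
        rw [mul_assoc, hpp]
      omega
    have hdig : s / b ^ i % b = n / b ^ i % b := by
      have h1 : n / b ^ i = s / b ^ i + (M * b ^ (k - i - 1)) * b := by
        conv_lhs => rw [hsplit]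
        rw [pow_succ]
        rw [show s + M * b ^ (k-i-1) * (b ^ i * b) = s + (M * b ^ (k-i-1) * b) * b ^ i by ring]
        rw [Nat.add_mul_div_right _ _ (Nat.pow_pos hb0)]
      rw [h1, Nat.add_mul_mod_self_right]
    rw [hdig]
    exact hg i
  · intro n hn n' hn' h
    simp only [Finset.coe_filter, Set.mem_setOf_eq, Finset.mem_Ico] at hn hn'
    have h2 : n - M * b ^ k = n' - M * b ^ k := h
    omega

lemma count_interval (h2d : 2 ≤ d) (hdb : d ≤ b) (k A B : ℕ) (hAB : B ≤ A + b ^ k) :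
    ((Finset.Ico A B).filter (goodN b d)).card ≤ 2 * d ^ k := by
  have hb0 : 0 < b := by omega
  set M := A / b ^ k with hM
  have hA1 : M * b ^ k ≤ A := by rw [hM]; exact Nat.div_mul_le_self A (b ^ k)
  have hA2 : A < M * b ^ k + b ^ k := by
    rw [hM]; exact Nat.lt_div_mul_add (Nat.pow_pos hb0)
  have hsub : Finset.Ico A B ⊆ Finset.Ico (M * b ^ k) (M * b ^ k + b ^ k) ∪
      Finset.Ico ((M+1) * b ^ k) ((M+1) * b ^ k + b ^ k) := by
    intro n hn
    simp only [Finset.mem_Ico, Finset.mem_union] at hn ⊢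
    have : (M+1) * b ^ k = M * b ^ k + b ^ k := by ring
    omega
  calc ((Finset.Ico A B).filter (goodN b d)).card
      ≤ ((Finset.Ico (M * b ^ k) (M * b ^ k + b ^ k) ∪
          Finset.Ico ((M+1) * b ^ k) ((M+1) * b ^ k + b ^ k)).filter (goodN b d)).card :=
        Finset.card_le_card (Finset.filter_subset_filter _ hsub)
    _ ≤ ((Finset.Ico (M * b ^ k) (M * b ^ k + b ^ k)).filter (goodN b d)).card +
        ((Finset.Ico ((M+1) * b ^ k) ((M+1) * b ^ k + b ^ k)).filter (goodN b d)).card := by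
          rw [Finset.filter_union]
          exact Finset.card_union_le _ _
    _ ≤ d ^ k + d ^ k := Nat.add_le_add (count_aligned h2d hdb k M) (count_aligned h2d hdb k (M+1))
    _ = 2 * d ^ k := by ring

/-- the predicate on `ℤ`: nonnegative with all base-`b` digits `< d` -/
def goodZ (b d : ℕ) (j : ℤ) : Prop := 0 ≤ j ∧ goodN b d j.toNat

lemma count_int (h2d : 2 ≤ d) (hdb : d ≤ b) (k : ℕ) (m M : ℤ)
    (hlen : M.toNat + 1 ≤ m.toNat + b ^ k) :
    ((Finset.Icc m M).filter (goodZ b d)).card ≤ 2 * d ^ k := by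
  refine le_trans (Finset.card_le_card_of_injOn (fun j => j.toNat) ?_ ?_)
    (count_interval h2d hdb k m.toNat (M.toNat + 1) (by omega))
  · intro j hj
    simp only [Finset.mem_coe, Finset.mem_filter, Finset.mem_Icc] at hj
    obtain ⟨⟨h1, h2⟩, h3, h4⟩ := hj
    simp only [Finset.mem_coe, Finset.mem_filter, Finset.mem_Ico]
    exact ⟨by omega, h4⟩
  · intro j hj j' hj' h
    simp only [Finset.coe_filter, Set.mem_setOf_eq, Finset.mem_Icc] at hj hj'
    have := hj.2.1; have := hj'.2.1
    have h2 : j.toNat = j'.toNat := h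
    omega
end

lemma measU (P : ℤ → Prop) : MeasurableSet {τ : ℝ | P ⌊τ⌋} := by
  have : {τ : ℝ | P ⌊τ⌋} = Int.floor ⁻¹' {j : ℤ | P j} := rfl
  rw [this]
  exact Int.measurable_floor (MeasurableSet.of_discrete)

lemma integral_step (P : ℤ → Prop) {p s t : ℝ} (hst : s ≤ t) (hp : 0 < p) :
    ∫ τ in s..t, |step (fun j => if P j then (1:ℝ) else 0) τ| ^ p
      = (volume ({τ : ℝ | P ⌊τ⌋} ∩ Set.Ioc s t)).toReal := by
  have hfun : (fun τ => |step (fun j => if P j then (1:ℝ) else 0) τ| ^ p)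
      = Set.indicator {τ : ℝ | P ⌊τ⌋} (fun _ => (1:ℝ)) := by
    funext τ
    by_cases h : P ⌊τ⌋
    · simp [step, h, Set.indicator_of_mem, Set.mem_setOf_eq]
    · simp [step, h, Set.indicator_of_notMem, Set.mem_setOf_eq,
        Real.zero_rpow hp.ne']
  rw [intervalIntegral.integral_of_le hst, hfun,
    setIntegral_indicator (measU P), setIntegral_const, smul_eq_mul, mul_one,
    Set.inter_comm]
  rfl

lemma meas_le_count (P : ℤ → Prop) (s t : ℝ) :
    volume ({τ : ℝ | P ⌊τ⌋} ∩ Set.Ioc s t)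
      ≤ (((Finset.Icc ⌊s⌋ ⌊t⌋).filter P).card : ℝ≥0∞) := by
  have hsub : {τ : ℝ | P ⌊τ⌋} ∩ Set.Ioc s t ⊆
      ⋃ j ∈ (Finset.Icc ⌊s⌋ ⌊t⌋).filter P, Set.Ico (j : ℝ) (j + 1) := by
    intro τ ⟨h1, h2, h3⟩
    refine Set.mem_biUnion (Finset.mem_filter.2 ⟨Finset.mem_Icc.2
      ⟨Int.floor_le_floor h2.le, Int.floor_le_floor h3⟩, h1⟩) ?_
    exact ⟨Int.floor_le τ, by exact_mod_cast Int.lt_floor_add_one τ⟩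
  refine le_trans (measure_mono hsub) (le_trans (measure_biUnion_finset_le _ _) ?_)
  have hv : ∀ j : ℤ, volume (Set.Ico (j : ℝ) (j + 1)) = 1 := by
    intro j; rw [Real.volume_Ico]; simp
  simp only [hv, Finset.sum_const, nsmul_eq_mul, mul_one, le_refl]

lemma meas_ge (P : ℤ → Prop) (F : Finset ℕ) (hP : ∀ n ∈ F, P (n : ℤ)) (T : ℝ)
    (hT : ∀ n ∈ F, (n : ℝ) + 1 ≤ T) :
    (F.card : ℝ≥0∞) ≤ volume ({τ : ℝ | P ⌊τ⌋} ∩ Set.Ioc 0 T) := by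
  have hsub : (⋃ n ∈ F, Set.Ioo (n : ℝ) (n + 1)) ⊆ {τ : ℝ | P ⌊τ⌋} ∩ Set.Ioc 0 T := by
    intro τ hτ
    simp only [Set.mem_iUnion, exists_prop] at hτ
    obtain ⟨n, hnF, hn1, hn2⟩ := hτ
    have hfl : ⌊τ⌋ = (n : ℤ) := by
      rw [Int.floor_eq_iff]
      constructor
      · push_cast; exact hn1.le
      · push_cast; exact hn2
    refine ⟨by rw [Set.mem_setOf_eq, hfl]; exact hP n hnF, ?_, ?_⟩
    · have : (0 : ℝ) ≤ n := Nat.cast_nonneg n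
      linarith
    · linarith [hT n hnF]
  have hdisj : (↑F : Set ℕ).PairwiseDisjoint (fun n : ℕ => Set.Ioo (n : ℝ) (n + 1)) := by
    intro n _ m _ hnm
    rw [Function.onFun, Set.disjoint_left]
    intro τ h1 h2
    rcases lt_or_gt_of_ne hnm with h | h
    · have : (n : ℝ) + 1 ≤ m := by exact_mod_cast h
      exact absurd (h1.2.trans_le this) (not_lt.2 h2.1.le)
    · have : (m : ℝ) + 1 ≤ n := by exact_mod_cast h
      exact absurd (h2.2.trans_le this) (not_lt.2 h1.1.le)
  calc (F.card : ℝ≥0∞) = ∑ n ∈ F, volume (Set.Ioo (n : ℝ) (n + 1)) := by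
        have hv : ∀ n : ℕ, volume (Set.Ioo (n : ℝ) (n + 1)) = 1 := by
          intro n; rw [Real.volume_Ioo]; simp
        simp [hv]
    _ = volume (⋃ n ∈ F, Set.Ioo (n : ℝ) (n + 1)) :=
        (measure_biUnion_finset hdisj (fun n _ => measurableSet_Ioo)).symm
    _ ≤ _ := measure_mono hsub

lemma le_mnormR (p q : ℝ) (f : ℝ → ℝ) (a r : ℝ) (hr : 0 < r) :
    ENNReal.ofReal ((2 * r) ^ (1 / q - 1 / p) *
      (∫ t in (a - r)..(a + r), |f t| ^ p) ^ (1 / p)) ≤ mnormR p q f := by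
  unfold mnormR
  refine le_iSup_of_le a ?_
  refine le_iSup_of_le ⟨r, hr⟩ ?_
  exact le_rfl

lemma rpow_pow_swap (y : ℝ) (hy : 0 ≤ y) (n : ℕ) (e : ℝ) :
    (y ^ n) ^ e = (y ^ e) ^ n := by
  rw [← Real.rpow_natCast y n, ← Real.rpow_mul hy, mul_comm,
    Real.rpow_mul hy, Real.rpow_natCast]

end MorreyAux
open MeasureTheory in
theorem stmt14 (p₁ p₂ q : ℝ) (hp₁ : 1 ≤ p₁) (h12 : p₁ < p₂) (h2q : p₂ ≤ q) :
    ∃ x : ℤ → ℝ, (∀ j, x j = 0 ∨ x j = 1) ∧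
      mnormR p₁ q (step x) ≠ ⊤ ∧ mnormR p₂ q (step x) = ⊤ := by
  classical
  have hp1 : 0 < p₁ := by linarith
  have hp2 : 0 < p₂ := by linarith
  have hq : 0 < q := by linarith
  have hint : 1 - p₂ / q < 1 - p₁ / q := by
    have : p₁ / q < p₂ / q := by
      apply div_lt_div_of_pos_right h12 hq
    linarith
  obtain ⟨ρ, hρ1, hρ2⟩ := exists_rat_btwn hint
  set α : ℝ := (ρ : ℝ) with hαdef
  have hp2q : p₂ / q ≤ 1 := (div_le_one hq).2 h2q
  have hα0 : 0 < α := lt_of_le_of_lt (by linarith) hρ1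
  have hα1 : α < 1 := by
    have : 0 < p₁ / q := by positivity
    linarith
  have hρpos : 0 < ρ := by
    have h' : (0:ℝ) < (ρ:ℝ) := hα0
    exact_mod_cast h'
  set u : ℕ := ρ.num.toNat with hu
  set w : ℕ := ρ.den with hw
  have hw0 : 0 < w := ρ.pos
  have hnum : (ρ.num : ℤ) = (u : ℤ) := by
    rw [hu, Int.toNat_of_nonneg (Rat.num_nonneg.2 hρpos.le)]
  have hαuw : α = (u : ℝ) / (w : ℝ) := by
    rw [hαdef, Rat.cast_def, hnum, hw]
    push_cast
    ring
  have hu1 : 1 ≤ u := by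
    have h' : (0 : ℤ) < ρ.num := Rat.num_pos.2 hρpos
    rw [hnum] at h'
    omega
  have huw : u < w := by
    have h1 : (u : ℝ) / (w : ℝ) < 1 := by rw [← hαuw]; exact hα1
    have h2 : (u : ℝ) < (w : ℝ) := by
      rwa [div_lt_one (by exact_mod_cast hw0)] at h1
    exact_mod_cast h2
  set d : ℕ := 2 ^ u with hd
  set b : ℕ := 2 ^ w with hb
  have h2d : 2 ≤ d := by
    calc 2 = 2 ^ 1 := (pow_one 2).symm
    _ ≤ 2 ^ u := Nat.pow_le_pow_right (by norm_num) hu1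
  have hdb : d ≤ b := Nat.pow_le_pow_right (by norm_num) huw.le
  have hb2 : 2 ≤ b := le_trans h2d hdb
  have hbR : (1 : ℝ) < (b : ℝ) := by exact_mod_cast hb2.trans_lt' one_lt_two
  have hb0R : (0 : ℝ) < (b : ℝ) := by linarith
  have hd0R : (0 : ℝ) < (d : ℝ) := by exact_mod_cast lt_of_lt_of_le (by norm_num) h2d
  have hbα : ((b : ℕ) : ℝ) ^ α = ((d : ℕ) : ℝ) := by
    have h1 : ((b : ℕ) : ℝ) = (2 : ℝ) ^ (w : ℝ) := by
      rw [hb]; push_cast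
      rw [← Real.rpow_natCast 2 w]
    rw [h1, ← Real.rpow_mul (by norm_num)]
    have h2 : (w : ℝ) * α = (u : ℝ) := by
      rw [hαuw]
      field_simp
    rw [h2, Real.rpow_natCast, hd]
    push_cast
    ring
  have hpow : ∀ n : ℕ, (((b : ℕ) : ℝ) ^ n) ^ α = ((d : ℕ) : ℝ) ^ n := by
    intro n
    rw [rpow_pow_swap _ hb0R.le, hbα]
  refine ⟨fun j => if goodZ b d j then (1:ℝ) else 0, fun j => ?_, ?_, ?_⟩
  · by_cases h : goodZ b d j <;> simp [h]
  · -- finiteness for p₁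
    have hd2R : (2:ℝ) ≤ ((d : ℕ) : ℝ) := by exact_mod_cast h2d
    set C : ℝ := (6 * ((d : ℕ) : ℝ)) ^ (1 / p₁) with hC
    have hC1 : (1 : ℝ) ≤ C := Real.one_le_rpow (by linarith) (by positivity)
    have key : ∀ a r : ℝ, 0 < r →
        (2 * r) ^ (1 / q - 1 / p₁) *
          ((volume ({τ : ℝ | goodZ b d ⌊τ⌋} ∩ Set.Ioc (a - r) (a + r))).toReal) ^ (1 / p₁)
          ≤ C := by
      intro a r hr
      set μ := volume ({τ : ℝ | goodZ b d ⌊τ⌋} ∩ Set.Ioc (a - r) (a + r)) with hμ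
      have hμle : μ ≤ ENNReal.ofReal (2 * r) := by
        refine le_trans (measure_mono Set.inter_subset_right) ?_
        rw [Real.volume_Ioc]
        apply le_of_eq; congr 1; ring
      have hI0 : (0:ℝ) ≤ μ.toReal := ENNReal.toReal_nonneg
      have hIL : μ.toReal ≤ 2 * r := by
        have h := ENNReal.toReal_mono ENNReal.ofReal_ne_top hμle
        rwa [ENNReal.toReal_ofReal (by linarith)] at h
      rcases le_total (2 * r) 1 with hL | hL
      · calc (2*r) ^ (1/q - 1/p₁) * μ.toReal ^ (1/p₁)
            ≤ (2*r) ^ (1/q - 1/p₁) * (2*r) ^ (1/p₁) :=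
              mul_le_mul_of_nonneg_left (Real.rpow_le_rpow hI0 hIL (by positivity))
                (Real.rpow_nonneg (by linarith) _)
          _ = (2*r) ^ (1/q - 1/p₁ + 1/p₁) := (Real.rpow_add (by linarith) _ _).symm
          _ = (2*r) ^ (1/q) := by ring_nf
          _ ≤ 1 := Real.rpow_le_one (by linarith) hL (by positivity)
          _ ≤ C := hC1
      · -- large interval
        have hfl : ⌊a - r⌋ + 1 ≤ ⌊a + r⌋ := by
          have h1 : a - r + 1 ≤ a + r := by linarith
          calc ⌊a - r⌋ + 1 = ⌊a - r + 1⌋ := (Int.floor_add_one _).symm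
          _ ≤ ⌊a + r⌋ := Int.floor_le_floor h1
        set ℓ : ℕ := (⌊a + r⌋ - ⌊a - r⌋ + 1).toNat with hℓ
        have hℓ2 : 2 ≤ ℓ := by omega
        set k := Nat.clog b ℓ with hk
        have hbk : ℓ ≤ b ^ k := Nat.le_pow_clog (by omega) ℓ
        have hcount : μ ≤ ((2 * d ^ k : ℕ) : ℝ≥0∞) := by
          refine le_trans (meas_le_count _ _ _) ?_
          have h := count_int h2d hdb k ⌊a - r⌋ ⌊a + r⌋ (by omega)
          exact_mod_cast h
        have hIN : μ.toReal ≤ ((2 * d ^ k : ℕ) : ℝ) := by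
          have h := ENNReal.toReal_mono (ENNReal.natCast_ne_top _) hcount
          simpa using h
        have hk1 : 1 ≤ k := Nat.clog_pos (by omega) hℓ2
        have hkl : b ^ (k - 1) < ℓ := by
          have h := Nat.pow_pred_clog_lt_self (by omega : 1 < b) (by omega : 1 < ℓ)
          simpa [Nat.pred_eq_sub_one] using h
        have hdk : ((d ^ k : ℕ) : ℝ) ≤ ((d : ℕ) : ℝ) * ((ℓ : ℕ) : ℝ) ^ α := by
          have e1 : ((d ^ k : ℕ) : ℝ) = ((d : ℕ) : ℝ) * ((d : ℕ) : ℝ) ^ (k - 1) := by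
            push_cast
            rw [← pow_succ']
            congr 1
            omega
          rw [e1]
          have e2 : ((d : ℕ) : ℝ) ^ (k-1) = ((((b : ℕ) : ℝ)) ^ (k-1)) ^ α := (hpow (k-1)).symm
          have e3 : ((((b : ℕ) : ℝ)) ^ (k-1)) ^ α ≤ ((ℓ : ℕ) : ℝ) ^ α := by
            apply Real.rpow_le_rpow (by positivity) (by exact_mod_cast hkl.le) hα0.le
          have := e2 ▸ e3
          exact mul_le_mul_of_nonneg_left this hd0R.le
        have hℓL : ((ℓ : ℕ) : ℝ) ≤ 3 * (2 * r) := by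
          have e : ((ℓ : ℕ) : ℝ) = ((⌊a + r⌋ : ℝ) - (⌊a - r⌋ : ℝ) + 1) := by
            have e' : ((ℓ:ℕ):ℤ) = ⌊a + r⌋ - ⌊a - r⌋ + 1 := by rw [hℓ]; omega
            exact_mod_cast e'
          rw [e]
          have h1 : (⌊a + r⌋ : ℝ) ≤ a + r := Int.floor_le _
          have h2 : a - r - 1 < (⌊a - r⌋ : ℝ) := Int.sub_one_lt_floor _
          linarith
        have hL0 : (0:ℝ) < 2 * r := by linarith
        have hIb : μ.toReal ≤ 6 * ((d : ℕ) : ℝ) * (2*r) ^ α := by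
          have h3α : (3 : ℝ) ^ α ≤ 3 := by
            calc (3:ℝ) ^ α ≤ (3:ℝ) ^ (1:ℝ) :=
                  Real.rpow_le_rpow_of_exponent_le (by norm_num) hα1.le
            _ = 3 := Real.rpow_one 3
          have hcalc : ((ℓ : ℕ) : ℝ) ^ α ≤ 3 * (2*r) ^ α := by
            calc ((ℓ : ℕ) : ℝ) ^ α ≤ (3 * (2*r)) ^ α :=
                  Real.rpow_le_rpow (by positivity) hℓL hα0.le
            _ = 3 ^ α * (2*r) ^ α := Real.mul_rpow (by norm_num) hL0.le
            _ ≤ 3 * (2*r) ^ α :=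
                  mul_le_mul_of_nonneg_right h3α (Real.rpow_nonneg hL0.le _)
          calc μ.toReal ≤ ((2 * d ^ k : ℕ) : ℝ) := hIN
          _ = 2 * ((d ^ k : ℕ) : ℝ) := by push_cast; ring
          _ ≤ 2 * (((d : ℕ) : ℝ) * ((ℓ : ℕ) : ℝ) ^ α) := by linarith
          _ ≤ 2 * (((d : ℕ) : ℝ) * (3 * (2*r) ^ α)) := by
                have hd0 : (0:ℝ) ≤ ((d : ℕ) : ℝ) := hd0R.le
                have := mul_le_mul_of_nonneg_left hcalc hd0
                linarith
          _ = 6 * ((d : ℕ) : ℝ) * (2*r) ^ α := by ring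
        have hexp : 1/q - 1/p₁ + α * (1/p₁) ≤ 0 := by
          have h1 : α ≤ 1 - p₁ / q := hρ2.le
          have h2 : α * (1/p₁) ≤ (1 - p₁/q) * (1/p₁) :=
            mul_le_mul_of_nonneg_right h1 (by positivity)
          have h3 : (1 - p₁/q) * (1/p₁) = 1/p₁ - 1/q := by
            field_simp
          linarith
        calc (2*r) ^ (1/q - 1/p₁) * μ.toReal ^ (1/p₁)
            ≤ (2*r) ^ (1/q - 1/p₁) * (6 * ((d : ℕ) : ℝ) * (2*r) ^ α) ^ (1/p₁) :=
              mul_le_mul_of_nonneg_left (Real.rpow_le_rpow hI0 hIb (by positivity))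
                (Real.rpow_nonneg hL0.le _)
          _ = (6 * ((d : ℕ) : ℝ)) ^ (1/p₁) * ((2*r) ^ (1/q - 1/p₁) * ((2*r) ^ α) ^ (1/p₁)) := by
              rw [Real.mul_rpow (by positivity) (Real.rpow_nonneg hL0.le _)]
              ring
          _ = (6 * ((d : ℕ) : ℝ)) ^ (1/p₁) * (2*r) ^ (1/q - 1/p₁ + α * (1/p₁)) := by
              rw [← Real.rpow_mul hL0.le, ← Real.rpow_add hL0]
          _ ≤ (6 * ((d : ℕ) : ℝ)) ^ (1/p₁) * 1 :=
              mul_le_mul_of_nonneg_left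
                (Real.rpow_le_one_of_one_le_of_nonpos hL hexp) (by positivity)
          _ = C := by rw [mul_one]
    have hle : mnormR p₁ q (step (fun j => if goodZ b d j then (1:ℝ) else 0))
        ≤ ENNReal.ofReal C := by
      unfold mnormR
      refine iSup_le fun a => iSup_le fun r => ?_
      have hr : 0 < r.1 := r.2
      have har : a - r.1 ≤ a + r.1 := by linarith
      rw [integral_step (goodZ b d) har (by linarith : (0:ℝ) < p₁)]
      have harr : a + r.1 - (a - r.1) = 2 * r.1 := by ring
      apply ENNReal.ofReal_le_ofReal
      have h := key a r.1 hr
      convert h using 4 <;> ring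
    exact ne_top_of_le_ne_top ENNReal.ofReal_ne_top hle
  · -- infiniteness for p₂
    set ε : ℝ := 1/q - 1/p₂ + α * (1/p₂) with hε
    have hε0 : 0 < ε := by
      have h1 : 1 - p₂/q < α := hρ1
      have h2 : (1 - p₂/q) * (1/p₂) < α * (1/p₂) :=
        mul_lt_mul_of_pos_right h1 (by positivity)
      have h3 : (1 - p₂/q) * (1/p₂) = 1/p₂ - 1/q := by
        field_simp
      rw [hε]
      linarith
    have hB1 : (1:ℝ) < ((b : ℕ) : ℝ) ^ ε :=
      (Real.one_lt_rpow_iff_of_pos hb0R).2 (Or.inl ⟨hbR, hε0⟩)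
    have hval : ∀ k : ℕ, ENNReal.ofReal ((((b : ℕ) : ℝ) ^ ε) ^ k)
        ≤ mnormR p₂ q (step (fun j => if goodZ b d j then (1:ℝ) else 0)) := by
      intro k
      set T : ℝ := ((b : ℕ) : ℝ) ^ k with hT
      have hT0 : 0 < T := by positivity
      refine le_trans ?_ (le_mnormR p₂ q _ (T/2) (T/2) (by linarith))
      apply ENNReal.ofReal_le_ofReal
      have h1 : T/2 - T/2 = (0:ℝ) := by ring
      have h2 : T/2 + T/2 = T := by ring
      have h3 : 2 * (T/2) = T := by ring
      rw [h1, h2, h3, integral_step (goodZ b d) hT0.le (by linarith : (0:ℝ) < p₂)]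
      set F : Finset ℕ := (Finset.range (d ^ k)).image (gfun b d) with hF
      have hcard : F.card = d ^ k := by
        rw [hF, Finset.card_image_of_injective _ (gfun_strictMono h2d hdb).injective,
          Finset.card_range]
      have hμge : ((d ^ k : ℕ) : ℝ≥0∞) ≤ volume ({τ : ℝ | goodZ b d ⌊τ⌋} ∩ Set.Ioc 0 T) := by
        rw [← hcard]
        apply meas_ge
        · intro n hn
          rw [hF, Finset.mem_image] at hn
          obtain ⟨m, _, rfl⟩ := hn
          refine ⟨by positivity, ?_⟩
          rw [Int.toNat_natCast]
          exact gfun_good h2d hdb m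
        · intro n hn
          rw [hF, Finset.mem_image] at hn
          obtain ⟨m, hm, rfl⟩ := hn
          have hlt := gfun_lt h2d hdb k m (Finset.mem_range.1 hm)
          have hle : gfun b d m + 1 ≤ b ^ k := hlt
          have : ((gfun b d m : ℝ)) + 1 ≤ ((b ^ k : ℕ) : ℝ) := by exact_mod_cast hle
          rw [hT]
          push_cast at this ⊢
          linarith
      have hμfin : volume ({τ : ℝ | goodZ b d ⌊τ⌋} ∩ Set.Ioc 0 T) ≠ ⊤ := by
        refine ne_top_of_le_ne_top ?_ (measure_mono Set.inter_subset_right)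
        rw [Real.volume_Ioc]
        exact ENNReal.ofReal_ne_top
      have hIk : ((d ^ k : ℕ) : ℝ)
          ≤ (volume ({τ : ℝ | goodZ b d ⌊τ⌋} ∩ Set.Ioc 0 T)).toReal := by
        have h := ENNReal.toReal_mono hμfin hμge
        simpa using h
      have e1 : (((b : ℕ) : ℝ) ^ ε) ^ k = T ^ (1/q - 1/p₂) * (((d ^ k : ℕ)) : ℝ) ^ (1/p₂) := by
        have ha : ((d ^ k : ℕ) : ℝ) = T ^ α := by
          rw [hT, hpow k]
          push_cast
          ring
        rw [ha, ← Real.rpow_mul hT0.le, ← Real.rpow_add hT0, ← hε, hT,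
          rpow_pow_swap _ hb0R.le]
      rw [e1]
      exact mul_le_mul_of_nonneg_left
        (Real.rpow_le_rpow (by positivity) hIk (by positivity))
        (Real.rpow_nonneg hT0.le _)
    apply ENNReal.eq_top_of_forall_nnreal_le
    intro s
    obtain ⟨k, hk⟩ := pow_unbounded_of_one_lt (s : ℝ) hB1
    calc (s : ℝ≥0∞) = ENNReal.ofReal (s : ℝ) := (ENNReal.ofReal_coe_nnreal).symm
    _ ≤ ENNReal.ofReal ((((b : ℕ) : ℝ) ^ ε) ^ k) := ENNReal.ofReal_le_ofReal hk.le
    _ ≤ _ := hval k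
end

section
/- Let 1 ≤ p ≤ q < ∞ and let x = (x_j)_{j∈ℤ} be a sequence of nonnegative reals. For the step function x̃(t) = Σ_j x_j χ_{[j,j+1)}(t) and any interval [a−r, a+r] with r > 1, there exist k ∈ ℤ and n ∈ ℕ₀ with n + 1 ≤ 4r such that ∫_{a−r}^{a+r} x̃(t)^p dt ≤ Σ_{j=k}^{k+n} x_j^p; consequently (2r)^{1/q−1/p} (∫_{a−r}^{a+r} x̃(t)^p dt)^{1/p} ≤ 2^{1/p−1/q} ‖x‖*_{ℓ^p_q}. -/
open scoped ENNReal BigOperators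

open MeasureTheory intervalIntegral


lemma unit_ae (x : ℤ → ℝ) (p : ℝ) (j : ℤ) :
    ∀ᵐ t ∂(volume.restrict (Set.Ioc (j:ℝ) (j+1))), x ⌊t⌋ ^ p = x j ^ p := by
  rw [ae_restrict_iff' measurableSet_Ioc]
  have h : (volume : Measure ℝ) {((j:ℝ)+1)} = 0 := measure_singleton _
  filter_upwards [measure_eq_zero_iff_ae_notMem.mp h] with t ht hmem
  have : ⌊t⌋ = j := by
    rw [Int.floor_eq_iff]
    refine ⟨le_of_lt hmem.1, ?_⟩
    rcases lt_or_eq_of_le hmem.2 with h1 | h1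
    · exact h1
    · exact absurd h1 ht
  rw [this]

lemma unit_int (x : ℤ → ℝ) (p : ℝ) (j : ℤ) :
    IntegrableOn (fun t => x ⌊t⌋ ^ p) (Set.Ioc (j:ℝ) (j+1)) volume ∧
    ∫ t in (j:ℝ)..(j+1), x ⌊t⌋ ^ p = x j ^ p := by
  have hae : (fun _ : ℝ => x j ^ p) =ᵐ[volume.restrict (Set.Ioc (j:ℝ) (j+1))]
      fun t => x ⌊t⌋ ^ p := (unit_ae x p j).mono fun t ht => ht.symm
  constructor
  · exact (integrableOn_const (by simp)).congr_fun_ae hae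
  · rw [integral_of_le (by linarith),
      MeasureTheory.integral_congr_ae hae.symm]
    simp

lemma chain (x : ℤ → ℝ) (p : ℝ) (k : ℤ) : ∀ m : ℕ,
    IntegrableOn (fun t => x ⌊t⌋ ^ p) (Set.Ioc (k:ℝ) (k+m)) volume ∧
    ∫ t in (k:ℝ)..((k:ℝ)+m), x ⌊t⌋ ^ p = ∑ j ∈ Finset.Ico k (k+(m:ℤ)), x j ^ p := by
  intro m
  induction m with
  | zero => simp
  | succ m ih =>
    have hm : (0:ℝ) ≤ m := Nat.cast_nonneg m
    have hcast : ((k:ℝ) + (m+1:ℕ)) = ((k + (m:ℤ) : ℤ) : ℝ) + 1 := by push_cast; ring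
    have hcast2 : ((k:ℝ)+m) = ((k + (m:ℤ) : ℤ) : ℝ) := by push_cast; ring
    have hu := unit_int x p (k + m)
    have i1 : IntervalIntegrable (fun t => x ⌊t⌋ ^ p) volume (k:ℝ) ((k:ℝ)+m) :=
      (intervalIntegrable_iff_integrableOn_Ioc_of_le (by linarith)).mpr ih.1
    have i2 : IntervalIntegrable (fun t => x ⌊t⌋ ^ p) volume ((k:ℝ)+m) ((k:ℝ)+(m+1:ℕ)) := by
      rw [intervalIntegrable_iff_integrableOn_Ioc_of_le (by push_cast; linarith)]
      rw [hcast2, hcast]; exact hu.1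
    constructor
    · have : Set.Ioc (k:ℝ) (k+(m+1:ℕ)) = Set.Ioc (k:ℝ) (k+m) ∪ Set.Ioc ((k:ℝ)+m) ((k:ℝ)+(m+1:ℕ)) := by
        rw [Set.Ioc_union_Ioc_eq_Ioc (by linarith) (by push_cast; linarith)]
      rw [this]
      exact ih.1.union ((intervalIntegrable_iff_integrableOn_Ioc_of_le (by push_cast; linarith)).mp i2)
    · rw [← integral_add_adjacent_intervals i1 i2, ih.2]
      have h2 : ∫ t in ((k:ℝ)+m)..((k:ℝ)+(m+1:ℕ)), x ⌊t⌋ ^ p = x (k+m) ^ p := by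
        rw [hcast2, hcast]; exact hu.2
      rw [h2]
      have hins : Finset.Ico k (k+((m:ℤ)+1)) = insert (k+m) (Finset.Ico k (k+(m:ℤ))) := by
        ext j; simp [Finset.mem_Ico, Finset.mem_insert]; omega
      push_cast [hins]
      rw [Finset.sum_insert (by simp)]
      ring

theorem stmt17 (p q : ℝ) (hp : 1 ≤ p) (hpq : p ≤ q) (x : ℤ → ℝ) (hx : ∀ j, 0 ≤ x j)
    (a r : ℝ) (hr : 1 < r) :
    ∃ k : ℤ, ∃ n : ℕ, ((n : ℝ) + 1 ≤ 4 * r ∧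
      (∫ t in (a - r)..(a + r), step x t ^ p) ≤ ∑ j ∈ Finset.Icc k (k + n), x j ^ p) ∧
      ENNReal.ofReal ((2 * r) ^ (1 / q - 1 / p) *
          (∫ t in (a - r)..(a + r), step x t ^ p) ^ (1 / p))
        ≤ ENNReal.ofReal ((2 : ℝ) ^ (1 / p - 1 / q)) * dnormStar p q x := by
  have hp0 : (0:ℝ) < p := by linarith
  have hq0 : (0:ℝ) < q := by linarith
  have hr0 : (0:ℝ) < r := by linarith
  set k : ℤ := ⌊a - r⌋ with hk
  have hfl : ⌊a - r⌋ ≤ ⌊a + r⌋ := Int.floor_le_floor (by linarith)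
  set N : ℕ := (⌊a + r⌋ - k).toNat with hN
  have hNZ : (N : ℤ) = ⌊a + r⌋ - k := Int.toNat_of_nonneg (by omega)
  have hNR : (N : ℝ) = (⌊a + r⌋ : ℝ) - (k : ℝ) := by
    have : ((N:ℤ):ℝ) = ((⌊a + r⌋ - k : ℤ):ℝ) := by exact_mod_cast congrArg Int.cast hNZ
    push_cast at this; linarith
  have hbd : (N : ℝ) + 1 ≤ 4 * r := by
    have h1 : (⌊a + r⌋ : ℝ) ≤ a + r := Int.floor_le _
    have h2 : a - r - 1 < (k : ℝ) := Int.sub_one_lt_floor _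
    rw [hNR]; linarith
  -- the integral bound
  have hfle : (k : ℝ) ≤ a - r := Int.floor_le _
  have hfri : a + r < (k : ℝ) + (N + 1 : ℕ) := by
    push_cast
    rw [hNR]
    have := Int.lt_floor_add_one (a + r)
    linarith
  have hch := chain x p k (N + 1)
  have hIcc : Finset.Ico k (k + ((N:ℤ) + 1)) = Finset.Icc k (k + N) := by
    ext j; simp [Finset.mem_Ico, Finset.mem_Icc]; omega
  have hsum : ∫ t in (k:ℝ)..((k:ℝ)+(N+1:ℕ)), x ⌊t⌋ ^ p = ∑ j ∈ Finset.Icc k (k + N), x j ^ p := by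
    rw [hch.2, show (k + ((N+1:ℕ):ℤ)) = k + ((N:ℤ)+1) by push_cast; ring, hIcc]
  have hnonneg : ∀ t : ℝ, 0 ≤ x ⌊t⌋ ^ p := fun t => Real.rpow_nonneg (hx _) p
  have hintle : (∫ t in (a - r)..(a + r), step x t ^ p) ≤ ∑ j ∈ Finset.Icc k (k + N), x j ^ p := by
    rw [← hsum, integral_of_le (by linarith), integral_of_le (by push_cast; linarith)]
    exact setIntegral_mono_set hch.1 (Filter.Eventually.of_forall hnonneg)
      ((Set.Ioc_subset_Ioc hfle hfri.le).eventuallyLE)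
  refine ⟨k, N, ⟨hbd, hintle⟩, ?_⟩
  -- second part
  set e : ℝ := 1 / q - 1 / p with he
  have he0 : e ≤ 0 := by
    have : 1 / q ≤ 1 / p := one_div_le_one_div_of_le hp0 hpq
    rw [he]; linarith
  set S : ℝ := ∑ j ∈ Finset.Icc k (k + N), x j ^ p with hS
  have hS0 : 0 ≤ S := Finset.sum_nonneg fun j _ => Real.rpow_nonneg (hx _) p
  have hI0 : 0 ≤ ∫ t in (a - r)..(a + r), step x t ^ p :=
    intervalIntegral.integral_nonneg (by linarith) fun t _ => hnonneg t
  have hIS : (∫ t in (a - r)..(a + r), step x t ^ p) ^ (1/p) ≤ S ^ (1/p) :=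
    Real.rpow_le_rpow hI0 hintle (by positivity)
  have habs : (∑ j ∈ Finset.Icc k (k + (N:ℤ)), |x j| ^ p) = S := by
    refine Finset.sum_congr rfl fun j _ => ?_
    rw [abs_of_nonneg (hx j)]
  -- real inequality
  have hfactor : (2 * r) ^ e = 2 ^ (-e) * (4 * r) ^ e := by
    have h4 : (2:ℝ) ^ e * (2 * r) ^ e = (4 * r) ^ e := by
      rw [← Real.mul_rpow (by norm_num) (by positivity)]; ring_nf
    rw [← h4, ← mul_assoc, ← Real.rpow_add (by norm_num : (0:ℝ) < 2), neg_add_cancel,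
      Real.rpow_zero, one_mul]
  have hreal : (2 * r) ^ e * (∫ t in (a - r)..(a + r), step x t ^ p) ^ (1/p)
      ≤ 2 ^ (-e) * ((4 * r) ^ e * S ^ (1/p)) := by
    rw [hfactor, mul_assoc]
    refine mul_le_mul_of_nonneg_left ?_ (by positivity)
    exact mul_le_mul_of_nonneg_left hIS (by positivity)
  refine le_trans (ENNReal.ofReal_le_ofReal hreal) ?_
  rw [ENNReal.ofReal_mul (by positivity), ENNReal.ofReal_mul (by positivity)]
  have hexp : -e = 1/p - 1/q := by rw [he]; ring
  rw [hexp]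
  refine mul_le_mul_right ?_ _
  -- ofReal((4r)^e) * ofReal(S^{1/p}) ≤ dnormStar
  have hkey : ENNReal.ofReal ((4*r) ^ e) ≤ ((N : ℝ≥0∞) + 1) ^ e := by
    rw [← ENNReal.ofReal_rpow_of_pos (by positivity)]
    have hle : ((N : ℝ≥0∞) + 1) ≤ ENNReal.ofReal (4 * r) := by
      have : ((N : ℝ≥0∞) + 1) = ENNReal.ofReal ((N:ℝ) + 1) := by
        rw [ENNReal.ofReal_add (by positivity) zero_le_one]
        simp
      rw [this]
      exact ENNReal.ofReal_le_ofReal hbd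
    calc ENNReal.ofReal (4*r) ^ e = (ENNReal.ofReal (4*r) ^ (-e))⁻¹ := by
          rw [← ENNReal.rpow_neg, neg_neg]
      _ ≤ (((N : ℝ≥0∞) + 1) ^ (-e))⁻¹ := by
          exact ENNReal.inv_le_inv.mpr (ENNReal.rpow_le_rpow hle (by linarith))
      _ = ((N : ℝ≥0∞) + 1) ^ e := by rw [← ENNReal.rpow_neg, neg_neg]
  calc ENNReal.ofReal ((4*r) ^ e) * ENNReal.ofReal (S ^ (1/p))
      ≤ ((N : ℝ≥0∞) + 1) ^ e * ENNReal.ofReal (S ^ (1/p)) :=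
        mul_le_mul_left hkey _
    _ ≤ dnormStar p q x := by
        rw [dnormStar]
        have := le_iSup₂ (f := fun (k' : ℤ) (n : ℕ) => ((n + 1 : ℝ≥0∞) ^ (1 / q - 1 / p)) *
          ENNReal.ofReal ((∑ j ∈ Finset.Icc k' (k' + n), |x j| ^ p) ^ (1 / p))) k N
        simpa [habs, he] using this
end
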